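/- In a real inner product space, x ⊥_D^ε y holds if and only if |⟨x, y⟩| ≤ ε‖x‖‖y‖. -/

import Mathlib

theorem dragomir_orth_iff_inner {X : Type*} [NormedAddCommGroup X] [InnerProductSpace ℝ X]
    (x y : X) (ε : ℝ) (hε0 : 0 ≤ ε) (hε1 : ε < 1) :
    (∀ l : ℝ, ‖x + l • y‖ ≥ Real.sqrt (1 - ε ^ 2) * ‖x‖) ↔
      |(inner ℝ x y : ℝ)| ≤ ε * ‖x‖ * ‖y‖ := by
  set a : ℝ := inner ℝ x y with ha
  have hεsq : (0:ℝ) ≤ 1 - ε ^ 2 := by nlinarith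
  have hsq : ∀ l : ℝ, ‖x + l • y‖ ^ 2 = ‖x‖ ^ 2 + 2 * l * a + l ^ 2 * ‖y‖ ^ 2 := by
    intro l
    have := @norm_add_sq_real X _ _ x (l • y)
    rw [real_inner_smul_right, norm_smul] at this
    rw [this, ← ha]
    simp [Real.norm_eq_abs, mul_pow, sq_abs]
    ring
  constructor
  · intro h
    by_cases hy : y = 0
    · simp [hy, ha]
    have hy' : (0:ℝ) < ‖y‖ := norm_pos_iff.mpr hy
    have hy2 : (0:ℝ) < ‖y‖ ^ 2 := by positivity
    set l : ℝ := -a / ‖y‖ ^ 2 with hl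
    have h1 := h l
    have h2 : Real.sqrt (1 - ε ^ 2) * ‖x‖ ≥ 0 := by positivity
    have h3 : (1 - ε ^ 2) * ‖x‖ ^ 2 ≤ ‖x + l • y‖ ^ 2 := by
      have := mul_self_le_mul_self h2 h1
      calc (1 - ε ^ 2) * ‖x‖ ^ 2
          = (Real.sqrt (1 - ε ^ 2) * ‖x‖) * (Real.sqrt (1 - ε ^ 2) * ‖x‖) := by
            rw [mul_mul_mul_comm, Real.mul_self_sqrt hεsq]; ring
        _ ≤ ‖x + l • y‖ * ‖x + l • y‖ := this
        _ = ‖x + l • y‖ ^ 2 := by ring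
    rw [hsq l] at h3
    have e : ‖x‖ ^ 2 + 2 * l * a + l ^ 2 * ‖y‖ ^ 2 = ‖x‖ ^ 2 - a ^ 2 / ‖y‖ ^ 2 := by
      rw [hl]; field_simp; ring
    rw [e] at h3
    have h4 : a ^ 2 / ‖y‖ ^ 2 ≤ ε ^ 2 * ‖x‖ ^ 2 := by nlinarith
    have key : a ^ 2 ≤ ε ^ 2 * ‖x‖ ^ 2 * ‖y‖ ^ 2 := by
      have := (div_le_iff₀ hy2).mp h4
      linarith
    calc |a| = Real.sqrt (a ^ 2) := (Real.sqrt_sq_eq_abs a).symm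
      _ ≤ Real.sqrt (ε ^ 2 * ‖x‖ ^ 2 * ‖y‖ ^ 2) := Real.sqrt_le_sqrt key
      _ = ε * ‖x‖ * ‖y‖ := by
          rw [show ε ^ 2 * ‖x‖ ^ 2 * ‖y‖ ^ 2 = (ε * ‖x‖ * ‖y‖) ^ 2 by ring,
            Real.sqrt_sq (by positivity)]
  · intro h l
    rw [abs_le] at h
    have h2 : (0:ℝ) ≤ Real.sqrt (1 - ε ^ 2) * ‖x‖ := by positivity
    have h3 : (Real.sqrt (1 - ε ^ 2) * ‖x‖) ^ 2 ≤ ‖x + l • y‖ ^ 2 := by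
      rw [mul_pow, Real.sq_sqrt hεsq, hsq l]
      rcases le_or_gt 0 l with hl | hl
      · nlinarith [mul_le_mul_of_nonneg_left h.1 hl, sq_nonneg (ε * ‖x‖ - l * ‖y‖)]
      · nlinarith [mul_le_mul_of_nonneg_left h.2 (by linarith : (0:ℝ) ≤ -l),
          sq_nonneg (ε * ‖x‖ + l * ‖y‖)]
    have h5 := Real.sqrt_le_sqrt h3
    rwa [Real.sqrt_sq h2, Real.sqrt_sq (norm_nonneg _)] at h5
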